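/- Let p be a prime, let c ∈ ℕ with c ≥ 2 and gcd(c,p) = 1, and let n ∈ ℕ₀. For each N ≥ 1 set s_N := Σ_{a=0}^{p^N−1} aⁿ · ( Σ_{ξ ∈ μ_c, ξ ≠ 1} ξ^a/(1 − ξ^{p^N}) ) ∈ ℂ (the denominators are nonzero since gcd(c,p) = 1). Then: (1) for every N ≥ 1 there exists q_N ∈ ℚ with (q_N : ℂ) = s_N; and (2) in ℚ_p the sequence (q_N) converges to (1 − c^{n+1})·B_{n+1}/(n+1). (For n = 0 the limit equals (c−1)/2.) -/

import Mathlib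

/-- The Riemann sums `s_N = Σ_{a=0}^{p^N−1} aⁿ · Σ_{ξ ∈ μ_c, ξ≠1} ξ^a/(1 − ξ^{p^N})`
defining the integral `∫_{ℤ_p} xⁿ dμ̃_c(x)` against the Mazur measure. -/
noncomputable def mazurRiemannSum (p c n N : ℕ) : ℂ :=
  ∑ a ∈ Finset.range (p ^ N),
    (a : ℂ) ^ n *
      ∑ ξ ∈ (Polynomial.nthRootsFinset c (1 : ℂ)).erase 1, ξ ^ a / (1 - ξ ^ (p ^ N))

namespace MazurAux

open Finset Polynomial


/-- coefficients of the Faulhaber polynomial -/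
noncomputable def co (k i : ℕ) : ℚ := _root_.bernoulli i * ((k+1).choose i) / (k+1)

/-- Faulhaber polynomial function -/
noncomputable def Sp (k : ℕ) (x : ℚ) : ℚ := ∑ i ∈ range (k+1), co k i * x ^ (k+1-i)

lemma sum_range_pow_eq (k m : ℕ) : ∑ a ∈ range m, (a:ℚ)^k = Sp k m := by
  rw [sum_range_pow]
  exact sum_congr rfl fun i _ => by rw [co]; ring

noncomputable def SpPoly (k : ℕ) : ℚ[X] := ∑ i ∈ range (k+1), C (co k i) * X ^ (k+1-i)

lemma eval_SpPoly (k : ℕ) (x : ℚ) : (SpPoly k).eval x = Sp k x := by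
  simp [SpPoly, Sp, eval_finset_sum]

lemma Sp_succ_sub (k : ℕ) (x : ℚ) : Sp k (x+1) = Sp k x + x^k := by
  have hD : (SpPoly k).comp (X + 1) - SpPoly k - X^k = 0 := by
    apply Polynomial.eq_zero_of_infinite_isRoot
    apply Set.infinite_of_injective_forall_mem
      (f := fun a : ℕ => (a:ℚ)) Nat.cast_injective
    intro a
    simp only [Set.mem_setOf_eq, IsRoot, eval_sub, eval_pow, eval_comp, eval_add, eval_X,
      eval_one, eval_SpPoly]
    have h1 : ((a:ℚ)+1) = ((a+1 : ℕ) : ℚ) := by push_cast; ring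
    rw [h1, ← sum_range_pow_eq, ← sum_range_pow_eq, sum_range_succ]
    ring
  have := congrArg (Polynomial.eval x) hD
  simp only [eval_sub, eval_pow, eval_comp, eval_add, eval_X, eval_one, eval_SpPoly,
    eval_zero] at this
  linarith

lemma Sp_shift_sum (k : ℕ) (x : ℚ) (L : ℕ) :
    ∑ j ∈ range L, (x + j)^k = Sp k (x + L) - Sp k x := by
  induction L with
  | zero => simp
  | succ L ih =>
    rw [sum_range_succ, ih]
    have : x + ((L:ℚ)+1) = (x + L) + 1 := by ring
    push_cast
    rw [this, Sp_succ_sub]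
    ring

lemma Sp_zero (k : ℕ) : Sp k 0 = 0 := by
  apply Finset.sum_eq_zero
  intro i hi
  have : k+1-i ≠ 0 := by simp at hi; omega
  simp [zero_pow this]

lemma Sp_block (k c : ℕ) (hc : 0 < c) (L : ℕ) :
    Sp k ((c:ℚ) * L) = ∑ r ∈ range c, (c:ℚ)^k * (Sp k ((r:ℚ)/c + L) - Sp k ((r:ℚ)/c)) := by
  have hc0 : (c:ℚ) ≠ 0 := Nat.cast_ne_zero.mpr hc.ne'
  have key : ∑ a ∈ range (c*L), (a:ℚ)^k
      = ∑ r ∈ range c, ∑ j ∈ range L, ((r:ℚ) + c*j)^k := by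
    rw [Finset.sum_comm]
    induction L with
    | zero => simp
    | succ L ih =>
      rw [Nat.mul_succ, Finset.sum_range_add, ih, sum_range_succ]
      congr 1
      apply sum_congr rfl
      intro r _
      push_cast
      ring_nf
  have h2 : ((c:ℚ) * L) = ((c*L : ℕ) : ℚ) := by push_cast; ring
  rw [h2, ← sum_range_pow_eq, key]
  apply sum_congr rfl
  intro r _
  rw [← Sp_shift_sum, Finset.mul_sum]
  apply sum_congr rfl
  intro j _
  rw [← mul_pow]
  congr 1
  field_simp


variable (p : ℕ) [Fact p.Prime]

lemma norm_natCast_le_one (a : ℕ) : ‖(a : ℚ_[p])‖ ≤ 1 := by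
  have := Padic.norm_int_le_one (p := p) (a : ℤ)
  push_cast at this
  exact this

lemma pow_taylor (y L : ℚ_[p]) (hy : ‖y‖ ≤ 1) (hL : ‖L‖ ≤ 1) (e : ℕ) :
    ‖(y+L)^e - y^e - e * y^(e-1) * L‖ ≤ (e+1) * ‖L‖^2 := by
  have hL2 : (0:ℝ) ≤ ‖L‖^2 := by positivity
  match e with
  | 0 => simpa using hL2
  | (e+1) =>
    have hx : (y+L)^(e+1) - y^(e+1) - (e+1 : ℕ) * y^(e+1-1) * L
        = ∑ j ∈ range e, y^j * L^(e+1-j) * ((e+1).choose j : ℚ_[p]) := by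
      rw [add_pow]
      rw [sum_range_succ, sum_range_succ]
      simp [Nat.choose_succ_self_right]
      ring
    rw [hx]
    calc ‖∑ j ∈ range e, y^j * L^(e+1-j) * ((e+1).choose j : ℚ_[p])‖
        ≤ ∑ j ∈ range e, ‖y^j * L^(e+1-j) * ((e+1).choose j : ℚ_[p])‖ := norm_sum_le _ _
      _ ≤ ∑ j ∈ range e, ‖L‖^2 := by
          apply sum_le_sum
          intro j hj
          rw [norm_mul, norm_mul, norm_pow, norm_pow]
          have h1 : ‖y‖^j ≤ 1 := pow_le_one₀ (norm_nonneg _) hy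
          have h2 : ‖L‖^(e+1-j) ≤ ‖L‖^2 := by
            apply pow_le_pow_of_le_one (norm_nonneg _) hL
            simp at hj; omega
          have h3 : ‖((e+1).choose j : ℚ_[p])‖ ≤ 1 := norm_natCast_le_one p _
          calc ‖y‖^j * ‖L‖^(e+1-j) * ‖((e+1).choose j : ℚ_[p])‖
              ≤ 1 * ‖L‖^2 * 1 := by
                apply mul_le_mul _ h3 (norm_nonneg _) (by positivity)
                exact mul_le_mul h1 h2 (by positivity) zero_le_one
            _ = ‖L‖^2 := by ring
      _ = e * ‖L‖^2 := by rw [sum_const, card_range]; simp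
      _ ≤ ((e+1 : ℕ)+1) * ‖L‖^2 := by push_cast; nlinarith [hL2]

noncomputable def SpQ (k : ℕ) (x : ℚ_[p]) : ℚ_[p] :=
  ∑ i ∈ range (k+1), (co k i : ℚ_[p]) * x ^ (k+1-i)

noncomputable def DvQ (k : ℕ) (x : ℚ_[p]) : ℚ_[p] :=
  ∑ i ∈ range (k+1), (co k i : ℚ_[p]) * ((k+1-i : ℕ) : ℚ_[p]) * x ^ (k-i)

noncomputable def CK (k : ℕ) : ℝ := ∑ i ∈ range (k+1), ‖(co k i : ℚ_[p])‖

lemma CK_nonneg (k : ℕ) : 0 ≤ CK p k := sum_nonneg fun i _ => norm_nonneg _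

lemma taylor_SpQ (k : ℕ) (y L : ℚ_[p]) (hy : ‖y‖ ≤ 1) (hL : ‖L‖ ≤ 1) :
    ‖SpQ p k (y+L) - SpQ p k y - L * DvQ p k y‖ ≤ ((k+2) * CK p k) * ‖L‖^2 := by
  have hx : SpQ p k (y+L) - SpQ p k y - L * DvQ p k y
      = ∑ i ∈ range (k+1), (co k i : ℚ_[p]) *
          ((y+L)^(k+1-i) - y^(k+1-i) - ((k+1-i : ℕ) : ℚ_[p]) * y^(k+1-i-1) * L) := by
    rw [SpQ, SpQ, DvQ, mul_sum, ← sum_sub_distrib, ← sum_sub_distrib]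
    apply sum_congr rfl
    intro i hi
    have : k+1-i-1 = k-i := by omega
    rw [this]; ring
  rw [hx]
  calc ‖∑ i ∈ range (k+1), (co k i : ℚ_[p]) * _‖
      ≤ ∑ i ∈ range (k+1), ‖(co k i : ℚ_[p]) *
          ((y+L)^(k+1-i) - y^(k+1-i) - ((k+1-i : ℕ) : ℚ_[p]) * y^(k+1-i-1) * L)‖ :=
        norm_sum_le _ _
    _ ≤ ∑ i ∈ range (k+1), ‖(co k i : ℚ_[p])‖ * ((k+2) * ‖L‖^2) := by
        apply sum_le_sum
        intro i hi
        rw [norm_mul]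
        apply mul_le_mul_of_nonneg_left _ (norm_nonneg _)
        calc ‖(y+L)^(k+1-i) - y^(k+1-i) - ((k+1-i : ℕ) : ℚ_[p]) * y^(k+1-i-1) * L‖
            ≤ ((k+1-i : ℕ)+1) * ‖L‖^2 := pow_taylor p y L hy hL _
          _ ≤ (k+2) * ‖L‖^2 := by
              apply mul_le_mul_of_nonneg_right _ (by positivity)
              simp at hi ⊢
              push_cast
              have : (k+1-i : ℕ) ≤ (k+1 : ℕ) := by omega
              calc ((k+1-i : ℕ) : ℝ) + 1 ≤ (k+1 : ℕ) + 1 := by exact_mod_cast by omega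
                _ = (k : ℝ) + 2 := by push_cast; ring
    _ = ((k+2) * CK p k) * ‖L‖^2 := by
        rw [CK, Finset.mul_sum, Finset.sum_mul]
        exact sum_congr rfl fun i _ => by ring

lemma lip_SpQ (k : ℕ) (x y : ℚ_[p]) (hx : ‖x‖ ≤ 1) (hy : ‖y‖ ≤ 1) :
    ‖SpQ p k x - SpQ p k y‖ ≤ ((k+2) * CK p k) * ‖x - y‖ := by
  have hsum : SpQ p k x - SpQ p k y
      = ∑ i ∈ range (k+1), (co k i : ℚ_[p]) * (x^(k+1-i) - y^(k+1-i)) := by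
    rw [SpQ, SpQ, ← sum_sub_distrib]
    exact sum_congr rfl fun i _ => by ring
  rw [hsum]
  calc ‖∑ i ∈ range (k+1), (co k i : ℚ_[p]) * (x^(k+1-i) - y^(k+1-i))‖
      ≤ ∑ i ∈ range (k+1), ‖(co k i : ℚ_[p]) * (x^(k+1-i) - y^(k+1-i))‖ := norm_sum_le _ _
    _ ≤ ∑ i ∈ range (k+1), ‖(co k i : ℚ_[p])‖ * ((k+2) * ‖x - y‖) := by
        apply sum_le_sum
        intro i hi
        rw [norm_mul]
        apply mul_le_mul_of_nonneg_left _ (norm_nonneg _)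
        have hgeo : x^(k+1-i) - y^(k+1-i)
            = (∑ j ∈ range (k+1-i), x ^ j * y ^ (k+1-i - 1 - j)) * (x - y) :=
          (geom_sum₂_mul x y (k+1-i)).symm
        rw [hgeo, norm_mul]
        apply mul_le_mul_of_nonneg_right _ (norm_nonneg _)
        calc ‖∑ j ∈ range (k+1-i), x ^ j * y ^ (k+1-i-1-j)‖
            ≤ ∑ j ∈ range (k+1-i), ‖x ^ j * y ^ (k+1-i-1-j)‖ := norm_sum_le _ _
          _ ≤ ∑ j ∈ range (k+1-i), 1 := by
              apply sum_le_sum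
              intro j _
              rw [norm_mul, norm_pow, norm_pow]
              calc ‖x‖^j * ‖y‖^(k+1-i-1-j) ≤ 1 * 1 :=
                    mul_le_mul (pow_le_one₀ (norm_nonneg _) hx)
                      (pow_le_one₀ (norm_nonneg _) hy) (by positivity) zero_le_one
                _ = 1 := by ring
          _ = (k+1-i : ℕ) := by rw [sum_const, card_range]; simp
          _ ≤ (k+2 : ℝ) := by
              have : (k+1-i : ℕ) ≤ k+1 := by omega
              calc ((k+1-i : ℕ) : ℝ) ≤ ((k+1 : ℕ) : ℝ) := by exact_mod_cast this
                _ ≤ (k : ℝ) + 2 := by push_cast; linarith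
    _ = ((k+2) * CK p k) * ‖x - y‖ := by
        rw [CK, Finset.mul_sum, Finset.sum_mul]
        exact sum_congr rfl fun i _ => by ring

lemma SpQ_zero (k : ℕ) : SpQ p k 0 = 0 := by
  apply Finset.sum_eq_zero
  intro i hi
  have : k+1-i ≠ 0 := by simp at hi; omega
  simp [zero_pow this]

lemma co_self (k : ℕ) : co k k = _root_.bernoulli k := by
  rw [co, Nat.choose_succ_self_right]
  have : ((k:ℚ)+1) ≠ 0 := by positivity
  field_simp
  push_cast; ring

lemma small_SpQ (k : ℕ) (x : ℚ_[p]) (hx : ‖x‖ ≤ 1) :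
    ‖SpQ p k x - ((_root_.bernoulli k : ℚ) : ℚ_[p]) * x‖ ≤ CK p k * ‖x‖^2 := by
  have hs : SpQ p k x - ((_root_.bernoulli k : ℚ) : ℚ_[p]) * x
      = ∑ i ∈ range k, (co k i : ℚ_[p]) * x^(k+1-i) := by
    rw [SpQ, sum_range_succ, co_self]
    simp
  rw [hs]
  calc ‖∑ i ∈ range k, (co k i : ℚ_[p]) * x^(k+1-i)‖
      ≤ ∑ i ∈ range k, ‖(co k i : ℚ_[p]) * x^(k+1-i)‖ := norm_sum_le _ _
    _ ≤ ∑ i ∈ range k, ‖(co k i : ℚ_[p])‖ * ‖x‖^2 := by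
        apply sum_le_sum
        intro i hi
        rw [norm_mul, norm_pow]
        apply mul_le_mul_of_nonneg_left _ (norm_nonneg _)
        apply pow_le_pow_of_le_one (norm_nonneg _) hx
        simp at hi; omega
    _ ≤ ∑ i ∈ range (k+1), ‖(co k i : ℚ_[p])‖ * ‖x‖^2 := by
        apply sum_le_sum_of_subset_of_nonneg (fun x hx => mem_range.2 (Nat.lt_succ_of_lt (mem_range.1 hx)))
        intro i _ _; positivity
    _ = CK p k * ‖x‖^2 := by rw [CK, sum_mul]

lemma choose_mul_sub (k i : ℕ) : (k+2).choose i * (k+2-i) = (k+2) * ((k+1).choose i) := by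
  calc (k+2).choose i * (k+2-i) = (k+2).choose (i+1) * (i+1) :=
        (Nat.choose_succ_right_eq _ _).symm
    _ = (k+2) * ((k+1).choose i) := (Nat.add_one_mul_choose_eq (k+1) i).symm

lemma co_succ_mul (k i : ℕ) : co (k+1) i * ((k+2-i : ℕ) : ℚ) = ((k:ℚ)+1) * co k i := by
  rw [co, co]
  simp only [show k+1+1 = k+2 from rfl]
  have hnat : (((k+2).choose i : ℕ) : ℚ) * ((k+2-i : ℕ) : ℚ) = ((k:ℚ)+2) * (((k+1).choose i : ℕ) : ℚ) := by
    have := congrArg (fun m : ℕ => (m:ℚ)) (choose_mul_sub k i)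
    push_cast at this
    linarith [this]
  have h2 : ((k:ℚ)+2) ≠ 0 := by positivity
  have h3 : ((k:ℚ)+1) ≠ 0 := by positivity
  field_simp
  linear_combination (norm := (push_cast; ring)) _root_.bernoulli i * hnat

lemma DvQ_succ (k : ℕ) (y : ℚ_[p]) :
    DvQ p (k+1) y = ((k:ℚ_[p])+1) * SpQ p k y + ((_root_.bernoulli (k+1) : ℚ) : ℚ_[p]) := by
  rw [DvQ, sum_range_succ, SpQ, mul_sum]
  congr 1
  · apply sum_congr rfl
    intro i hi
    simp only [show k+1+1 = k+2 from rfl]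
    have hcast : (co (k+1) i : ℚ_[p]) * ((k+2-i : ℕ) : ℚ_[p]) = ((k:ℚ_[p])+1) * (co k i : ℚ_[p]) := by
      exact_mod_cast co_succ_mul k i
    rw [hcast, mul_assoc]
  · rw [co_self]
    simp


lemma cast_Sp (k : ℕ) (x : ℚ) : ((Sp k x : ℚ) : ℚ_[p]) = SpQ p k (x : ℚ_[p]) := by
  rw [Sp, SpQ]
  push_cast
  rfl

lemma raabe (c : ℕ) (hc : 0 < c) (hc1 : ‖((c:ℕ) : ℚ_[p])‖ = 1) (k : ℕ) :
    (c:ℚ)^(k+1) * ((k:ℚ)+1) * ∑ r ∈ range c, Sp k ((r:ℚ)/c)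
      = ((c:ℚ) - (c:ℚ)^(k+2)) * _root_.bernoulli (k+1) := by
  set B' : ℚ_[p] := ((_root_.bernoulli (k+1) : ℚ) : ℚ_[p]) with hB'
  have hρ : ∀ r : ℕ, ‖(r : ℚ_[p]) / (c : ℚ_[p])‖ ≤ 1 := by
    intro r
    rw [norm_div, hc1, div_one]
    exact norm_natCast_le_one p r
  set Tq : ℚ := (c:ℚ)^(k+1) * ∑ r ∈ range c,
      (((k:ℚ)+1) * Sp k ((r:ℚ)/c) + _root_.bernoulli (k+1)) with hTq
  have hTexp : ((Tq : ℚ) : ℚ_[p]) = (c:ℚ_[p])^(k+1) * ∑ r ∈ range c,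
      (((k:ℚ_[p])+1) * SpQ p k ((r : ℚ_[p]) / (c : ℚ_[p])) + B') := by
    rw [hTq]
    push_cast
    simp only [cast_Sp]
    push_cast
    rfl
  set KK : ℝ := CK p (k+1) + c * ((((k+1 : ℕ):ℝ)+2) * CK p (k+1)) with hKK
  have key : ∀ t : ℕ, ‖(c:ℚ_[p]) * B' - (Tq : ℚ_[p])‖ ≤ KK * ((p:ℝ)⁻¹)^t := by
    intro t
    have hPnorm : ‖(p:ℚ_[p])^t‖ = ((p:ℝ)⁻¹)^t := by rw [norm_pow, Padic.norm_p]
    have hppos : (1:ℝ) < p := by exact_mod_cast (Fact.out : p.Prime).one_lt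
    have hP1 : ‖(p:ℚ_[p])^t‖ ≤ 1 := by
      rw [hPnorm]
      apply pow_le_one₀ (by positivity)
      rw [inv_le_one_iff₀]; right; linarith
    have hPpos : 0 < ‖(p:ℚ_[p])^t‖ := by
      rw [hPnorm]; positivity
    -- cast the block identity
    have hblock : SpQ p (k+1) ((c:ℚ_[p]) * (p:ℚ_[p])^t)
        = ∑ r ∈ range c, (c:ℚ_[p])^(k+1) *
            (SpQ p (k+1) ((r : ℚ_[p]) / (c : ℚ_[p]) + (p:ℚ_[p])^t)
              - SpQ p (k+1) ((r : ℚ_[p]) / (c : ℚ_[p]))) := by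
      have h0 := Sp_block (k+1) c hc (p^t)
      have h1 := congrArg (fun q : ℚ => (q : ℚ_[p])) h0
      simp only [Rat.cast_sum, Rat.cast_mul, Rat.cast_sub, Rat.cast_pow, Rat.cast_natCast,
        cast_Sp] at h1
      push_cast at h1
      exact_mod_cast h1
    have hd : ∀ r : ℕ, DvQ p (k+1) ((r : ℚ_[p]) / (c : ℚ_[p]))
        = ((k:ℚ_[p])+1) * SpQ p k ((r : ℚ_[p]) / (c : ℚ_[p])) + B' := fun r => DvQ_succ p k _
    have hTP : (Tq : ℚ_[p]) * (p:ℚ_[p])^t = ∑ r ∈ range c, (c:ℚ_[p])^(k+1) *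
        ((p:ℚ_[p])^t * DvQ p (k+1) ((r : ℚ_[p]) / (c : ℚ_[p]))) := by
      simp only [hd, hTexp, mul_sum, sum_mul]
      exact sum_congr rfl fun r _ => by ring
    have hsplit : ((c:ℚ_[p]) * B' - (Tq : ℚ_[p])) * (p:ℚ_[p])^t
        = -(SpQ p (k+1) ((c:ℚ_[p]) * (p:ℚ_[p])^t) - B' * ((c:ℚ_[p]) * (p:ℚ_[p])^t))
          + ∑ r ∈ range c, (c:ℚ_[p])^(k+1) *
              (SpQ p (k+1) ((r : ℚ_[p]) / (c : ℚ_[p]) + (p:ℚ_[p])^t)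
                - SpQ p (k+1) ((r : ℚ_[p]) / (c : ℚ_[p]))
                - (p:ℚ_[p])^t * DvQ p (k+1) ((r : ℚ_[p]) / (c : ℚ_[p]))) := by
      have h2 : ∑ r ∈ range c, (c:ℚ_[p])^(k+1) *
          (SpQ p (k+1) ((r : ℚ_[p]) / (c : ℚ_[p]) + (p:ℚ_[p])^t)
            - SpQ p (k+1) ((r : ℚ_[p]) / (c : ℚ_[p]))
            - (p:ℚ_[p])^t * DvQ p (k+1) ((r : ℚ_[p]) / (c : ℚ_[p])))
          = SpQ p (k+1) ((c:ℚ_[p]) * (p:ℚ_[p])^t) - (Tq : ℚ_[p]) * (p:ℚ_[p])^t := by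
        rw [hblock, hTP, ← sum_sub_distrib]
        exact sum_congr rfl fun r _ => by ring
      rw [h2]
      ring
    have hcP : ‖(c:ℚ_[p]) * (p:ℚ_[p])^t‖ ≤ 1 := by
      rw [norm_mul, hc1, one_mul]; exact hP1
    have hb1 : ‖SpQ p (k+1) ((c:ℚ_[p]) * (p:ℚ_[p])^t) - B' * ((c:ℚ_[p]) * (p:ℚ_[p])^t)‖
        ≤ CK p (k+1) * ‖(p:ℚ_[p])^t‖^2 := by
      refine (small_SpQ p (k+1) _ hcP).trans ?_
      apply mul_le_mul_of_nonneg_left _ (CK_nonneg p (k+1))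
      rw [norm_mul, hc1, one_mul]
    have hb2 : ∀ r ∈ range c, ‖(c:ℚ_[p])^(k+1) *
        (SpQ p (k+1) ((r : ℚ_[p]) / (c : ℚ_[p]) + (p:ℚ_[p])^t)
          - SpQ p (k+1) ((r : ℚ_[p]) / (c : ℚ_[p]))
          - (p:ℚ_[p])^t * DvQ p (k+1) ((r : ℚ_[p]) / (c : ℚ_[p])))‖
        ≤ ((((k+1 : ℕ):ℝ)+2) * CK p (k+1)) * ‖(p:ℚ_[p])^t‖^2 := by
      intro r _
      rw [norm_mul, norm_pow, hc1, one_pow, one_mul]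
      exact taylor_SpQ p (k+1) _ _ (hρ r) hP1
    have hbound : ‖((c:ℚ_[p]) * B' - (Tq : ℚ_[p])) * (p:ℚ_[p])^t‖ ≤ KK * ‖(p:ℚ_[p])^t‖^2 := by
      rw [hsplit]
      refine (norm_add_le _ _).trans ?_
      rw [norm_neg, hKK, add_mul]
      refine add_le_add hb1 ?_
      refine (norm_sum_le _ _).trans ?_
      refine (sum_le_sum hb2).trans ?_
      rw [sum_const, card_range, nsmul_eq_mul]
      exact le_of_eq (by ring)
    rw [norm_mul] at hbound
    have h5 : ‖(c:ℚ_[p]) * B' - (Tq : ℚ_[p])‖ * ‖(p:ℚ_[p])^t‖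
        ≤ (KK * ‖(p:ℚ_[p])^t‖) * ‖(p:ℚ_[p])^t‖ := by
      rw [mul_assoc, ← pow_two]
      exact hbound
    have h4 := le_of_mul_le_mul_right h5 hPpos
    calc ‖(c:ℚ_[p]) * B' - (Tq : ℚ_[p])‖ ≤ KK * ‖(p:ℚ_[p])^t‖ := h4
      _ = KK * ((p:ℝ)⁻¹)^t := by rw [hPnorm]
  -- take the limit
  have hppos : (1:ℝ) < p := by exact_mod_cast (Fact.out : p.Prime).one_lt
  have hlim : Filter.Tendsto (fun t : ℕ => KK * ((p:ℝ)⁻¹)^t) Filter.atTop (nhds 0) := by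
    rw [show (0:ℝ) = KK * 0 by ring]
    exact (tendsto_pow_atTop_nhds_zero_of_lt_one (by positivity)
      (by rw [inv_lt_one_iff₀]; right; linarith)).const_mul KK
  have h0 := ge_of_tendsto' hlim key
  have heq : (c:ℚ_[p]) * B' = (Tq : ℚ_[p]) :=
    sub_eq_zero.mp (norm_le_zero_iff.mp h0)
  have qid : (c:ℚ) * _root_.bernoulli (k+1) = Tq := by
    have h5 : (((c:ℚ) * _root_.bernoulli (k+1) : ℚ) : ℚ_[p]) = ((Tq : ℚ) : ℚ_[p]) := by
      push_cast
      push_cast at heq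
      exact heq
    exact_mod_cast h5
  rw [hTq, Finset.sum_add_distrib, Finset.sum_const, card_range, nsmul_eq_mul,
    ← Finset.mul_sum] at qid
  linear_combination -qid


/-- canonical rational value of the Riemann sum -/
noncomputable def qq (p c n N : ℕ) : ℚ :=
  ∑ b ∈ range (p^N),
    (((c*b) % (p^N) : ℕ) : ℚ)^n * (((c:ℚ)-1)/2 - (((c*b) / (p^N) : ℕ) : ℚ))

section Complex

variable (c : ℕ) (hc : 2 ≤ c)

lemma mem_s_iff {ξ : ℂ} (hc : 2 ≤ c) :
    ξ ∈ (nthRootsFinset c (1 : ℂ)).erase 1 ↔ ξ ≠ 1 ∧ ξ^c = 1 := by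
  rw [Finset.mem_erase, Polynomial.mem_nthRootsFinset (by omega : 0 < c)]

lemma s_ne_zero {ξ : ℂ} (hc : 2 ≤ c) (hξ : ξ ∈ (nthRootsFinset c (1 : ℂ)).erase 1) : ξ ≠ 0 := by
  rw [mem_s_iff c hc] at hξ
  intro h
  rw [h] at hξ
  simp [zero_pow (by omega : c ≠ 0)] at hξ

lemma card_s (hc : 2 ≤ c) : ((nthRootsFinset c (1 : ℂ)).erase 1).card = c - 1 := by
  have hprim := Complex.isPrimitiveRoot_exp c (by omega)
  rw [Finset.card_erase_of_mem, hprim.card_nthRootsFinset]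
  rw [Polynomial.mem_nthRootsFinset (by omega : 0 < c)]
  exact one_pow c

lemma sum_pow_s (hc : 2 ≤ c) {j : ℕ} (hj0 : 0 < j) (hjc : j < c) :
    ∑ ξ ∈ (nthRootsFinset c (1 : ℂ)).erase 1, ξ^j = -1 := by
  haveI : NeZero c := ⟨by omega⟩
  have hprim := Complex.isPrimitiveRoot_exp c (by omega)
  set ζ := Complex.exp (2 * Real.pi * Complex.I / c) with hζ
  have himg : nthRootsFinset c (1 : ℂ) = (range c).image (fun i => ζ^i) := by
    apply Finset.eq_of_subset_of_card_le
    · intro ξ hξ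
      rw [Polynomial.mem_nthRootsFinset (by omega : 0 < c)] at hξ
      obtain ⟨i, hi, hieq⟩ := hprim.eq_pow_of_pow_eq_one hξ
      exact Finset.mem_image.mpr ⟨i, Finset.mem_range.mpr hi, hieq⟩
    · rw [hprim.card_nthRootsFinset, Finset.card_image_of_injOn]
      · rw [card_range]
      intro i hi i' hi' hii
      exact hprim.pow_inj (mem_range.mp hi) (mem_range.mp hi') hii
  have hfull : ∑ ξ ∈ nthRootsFinset c (1 : ℂ), ξ^j = 0 := by
    rw [himg, Finset.sum_image (fun i hi i' hi' hii =>
      hprim.pow_inj (mem_range.mp hi) (mem_range.mp hi') hii)]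
    have hne : ζ^j ≠ 1 := hprim.pow_ne_one_of_pos_of_lt hj0.ne' hjc
    have : ∑ i ∈ range c, (ζ^i)^j = ∑ i ∈ range c, (ζ^j)^i := by
      apply sum_congr rfl
      intro i _
      rw [← pow_mul, ← pow_mul, mul_comm]
    rw [this, geom_sum_eq hne]
    have : (ζ^j)^c = 1 := by rw [← pow_mul, mul_comm, pow_mul, hprim.pow_eq_one, one_pow]
    rw [this]
    simp
  have h1mem : (1:ℂ) ∈ nthRootsFinset c (1 : ℂ) := by
    rw [Polynomial.mem_nthRootsFinset (by omega : 0 < c)]; exact one_pow c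
  have h2 := Finset.sum_erase_add (nthRootsFinset c (1 : ℂ)) (fun ξ => ξ^j) h1mem
  have h3 : ∑ ξ ∈ (nthRootsFinset c (1 : ℂ)).erase 1, ξ^j + 1 = 0 := by
    simpa [hfull] using h2
  linear_combination h3

lemma sum_inv_s (hc : 2 ≤ c) :
    ∑ ξ ∈ (nthRootsFinset c (1 : ℂ)).erase 1, (1 - ξ)⁻¹ = ((c:ℂ)-1)/2 := by
  set s := (nthRootsFinset c (1 : ℂ)).erase 1 with hs
  have hmem : ∀ ξ ∈ s, ξ⁻¹ ∈ s := by
    intro ξ hξ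
    have h := (mem_s_iff c hc).mp hξ
    rw [mem_s_iff c hc]
    constructor
    · intro h1
      apply h.1
      rwa [inv_eq_one] at h1
    · rw [inv_pow, h.2, inv_one]
  have hrei : ∑ ξ ∈ s, (1-ξ)⁻¹ = ∑ ξ ∈ s, (1-ξ⁻¹)⁻¹ :=
    Finset.sum_nbij' (fun ξ => ξ⁻¹) (fun ξ => ξ⁻¹) hmem hmem
      (fun ξ hξ => inv_inv ξ) (fun ξ hξ => inv_inv ξ)
      (fun ξ hξ => by rw [inv_inv])
  have hpt : ∀ ξ ∈ s, (1-ξ⁻¹)⁻¹ = 1 - (1-ξ)⁻¹ := by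
    intro ξ hξ
    have h0 := s_ne_zero c hc hξ
    have h1 : (1:ℂ) - ξ ≠ 0 := sub_ne_zero.mpr (Ne.symm ((mem_s_iff c hc).mp hξ).1)
    have e1 : 1 - ξ⁻¹ = -(1-ξ) * ξ⁻¹ := by field_simp; ring
    rw [e1, mul_inv, inv_neg, inv_inv]
    field_simp
    ring
  rw [Finset.sum_congr rfl hpt, Finset.sum_sub_distrib, Finset.sum_const, card_s c hc] at hrei
  have hcard : ((c-1 : ℕ) : ℂ) = (c:ℂ) - 1 := by
    push_cast [Nat.cast_sub (by omega : 1 ≤ c)]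
    ring
  rw [nsmul_eq_mul, hcard, mul_one] at hrei
  linear_combination hrei / 2

lemma G_val (hc : 2 ≤ c) : ∀ j : ℕ, 1 ≤ j → j ≤ c →
    ∑ ξ ∈ (nthRootsFinset c (1 : ℂ)).erase 1, ξ^j/(1 - ξ) = (j:ℂ) - ((c:ℂ)+1)/2 := by
  intro j hj1
  induction j, hj1 using Nat.le_induction with
  | base =>
    intro _
    have hpt : ∀ ξ ∈ (nthRootsFinset c (1 : ℂ)).erase 1, ξ^1/(1-ξ) = -1 + (1-ξ)⁻¹ := by
      intro ξ hξ
      have h1 : (1:ℂ) - ξ ≠ 0 := sub_ne_zero.mpr (Ne.symm ((mem_s_iff c hc).mp hξ).1)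
      field_simp
      ring
    rw [Finset.sum_congr rfl hpt, Finset.sum_add_distrib, Finset.sum_const, card_s c hc,
      sum_inv_s c hc, nsmul_eq_mul]
    have hcard : ((c-1 : ℕ) : ℂ) = (c:ℂ) - 1 := by
      push_cast [Nat.cast_sub (by omega : 1 ≤ c)]
      ring
    rw [hcard]
    ring
  | succ j hj ih =>
    intro hjc
    have hpt : ∀ ξ ∈ (nthRootsFinset c (1 : ℂ)).erase 1, ξ^(j+1)/(1-ξ) = ξ^j/(1-ξ) - ξ^j := by
      intro ξ hξ
      have h1 : (1:ℂ) - ξ ≠ 0 := sub_ne_zero.mpr (Ne.symm ((mem_s_iff c hc).mp hξ).1)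
      field_simp
      ring
    rw [Finset.sum_congr rfl hpt, Finset.sum_sub_distrib, ih (by omega),
      sum_pow_s c hc (by omega) (by omega)]
    push_cast
    ring

lemma inner_sum_eq (M : ℕ) (hc : 2 ≤ c) (hcop : Nat.Coprime M c) {b : ℕ} (hb : b < M) :
    ∑ ξ ∈ (nthRootsFinset c (1 : ℂ)).erase 1, ξ^((c*b) % M)/(1 - ξ^M)
      = ((c:ℂ)-1)/2 - (((c*b)/M : ℕ) : ℂ) := by
  have hM : 0 < M := by omega
  set e := (c*b)/M with he_def
  have he : e < c := by
    rw [he_def, Nat.div_lt_iff_lt_mul hM]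
    exact mul_lt_mul_of_pos_left hb (by omega : 0 < c)
  obtain ⟨M', -, hM'⟩ := Nat.exists_mul_mod_eq_one_of_coprime hcop (by omega : 1 < c)
  have hpowmod : ∀ (ξ:ℂ), ξ^c = 1 → ∀ a : ℕ, ξ^a = ξ^(a%c) := by
    intro ξ h a
    conv_lhs => rw [← Nat.mod_add_div a c]
    rw [pow_add, pow_mul, h, one_pow, mul_one]
  have hinvpow : ∀ (ξ:ℂ), ξ^c = 1 → (ξ^M)^M' = ξ := by
    intro ξ h
    rw [← pow_mul, hpowmod ξ h (M*M'), hM', pow_one]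
  have hinvpow' : ∀ (ξ:ℂ), ξ^c = 1 → (ξ^M')^M = ξ := by
    intro ξ h
    rw [← pow_mul, hpowmod ξ h (M'*M), mul_comm M' M, hM', pow_one]
  have hg : ∀ ξ ∈ (nthRootsFinset c (1 : ℂ)).erase 1, ξ^M ∈ (nthRootsFinset c (1 : ℂ)).erase 1 := by
    intro ξ hξ
    obtain ⟨hξ1, hξc⟩ := (mem_s_iff c hc).mp hξ
    rw [mem_s_iff c hc]
    refine ⟨?_, by rw [← pow_mul, mul_comm, pow_mul, hξc, one_pow]⟩
    intro h1
    apply hξ1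
    rw [← hinvpow ξ hξc, h1, one_pow]
  have hg' : ∀ η ∈ (nthRootsFinset c (1 : ℂ)).erase 1, η^M' ∈ (nthRootsFinset c (1 : ℂ)).erase 1 := by
    intro η hη
    obtain ⟨hη1, hηc⟩ := (mem_s_iff c hc).mp hη
    rw [mem_s_iff c hc]
    refine ⟨?_, by rw [← pow_mul, mul_comm, pow_mul, hηc, one_pow]⟩
    intro h1
    apply hη1
    rw [← hinvpow' η hηc, h1, one_pow]
  have hrew : ∀ ξ ∈ (nthRootsFinset c (1 : ℂ)).erase 1,
      ξ^((c*b) % M)/(1 - ξ^M) = (ξ^M)^(c-e)/(1 - ξ^M) := by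
    intro ξ hξ
    obtain ⟨hξ1, hξc⟩ := (mem_s_iff c hc).mp hξ
    have hξ0 : ξ ≠ 0 := s_ne_zero c hc hξ
    have h1 : ξ^((c*b) % M) * ξ^(M*e) = 1 := by
      rw [← pow_add, he_def, Nat.mod_add_div (c*b) M, pow_mul, hξc, one_pow]
    have h2 : (ξ^M)^(c-e) * ξ^(M*e) = 1 := by
      rw [← pow_mul, ← pow_add]
      rw [← Nat.mul_add, Nat.sub_add_cancel he.le, mul_comm M c, pow_mul, hξc, one_pow]
    have h3 : ξ^((c*b) % M) = (ξ^M)^(c-e) :=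
      mul_right_cancel₀ (pow_ne_zero _ hξ0) (h1.trans h2.symm)
    rw [h3]
  rw [Finset.sum_congr rfl hrew]
  have hrei := Finset.sum_nbij' (s := (nthRootsFinset c (1 : ℂ)).erase 1)
    (t := (nthRootsFinset c (1 : ℂ)).erase 1)
    (f := fun ξ => (ξ^M)^(c-e)/(1-ξ^M)) (g := fun η => η^(c-e)/(1-η))
    (i := fun ξ => ξ^M) (j := fun η => η^M') hg hg'
    (fun ξ hξ => hinvpow ξ ((mem_s_iff c hc).mp hξ).2)
    (fun η hη => hinvpow' η ((mem_s_iff c hc).mp hη).2)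
    (fun ξ hξ => rfl)
  rw [hrei, G_val c hc (c-e) (by exact Nat.sub_pos_of_lt he) (Nat.sub_le c e)]
  push_cast [Nat.cast_sub he.le]
  ring

lemma part1 (p : ℕ) (n N : ℕ) (hc : 2 ≤ c) (hcop : Nat.Coprime c (p^N)) (hM : 2 ≤ p^N) :
    ((qq p c n N : ℚ) : ℂ) = mazurRiemannSum p c n N := by
  set M := p^N with hMdef
  obtain ⟨c', -, hcc'⟩ := Nat.exists_mul_mod_eq_one_of_coprime hcop (by omega : 1 < M)
  have h5 : c*c' ≡ 1 [MOD M] := by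
    unfold Nat.ModEq
    rw [hcc', Nat.mod_eq_of_lt (by omega : 1 < M)]
  have hmod : ∀ x : ℕ, x < M → (c*((c'*x) % M)) % M = x := by
    intro x hx
    have h6 : c*((c'*x)%M) ≡ x [MOD M] := by
      calc c*((c'*x)%M) ≡ c*(c'*x) [MOD M] := (Nat.mod_modEq _ _).mul_left c
        _ = (c*c')*x := by ring
        _ ≡ 1*x [MOD M] := h5.mul_right x
        _ = x := by ring
    calc (c*((c'*x)%M)) % M = x % M := h6
      _ = x := Nat.mod_eq_of_lt hx
  have hmod' : ∀ x : ℕ, x < M → (c'*((c*x) % M)) % M = x := by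
    intro x hx
    have h6 : c'*((c*x)%M) ≡ x [MOD M] := by
      calc c'*((c*x)%M) ≡ c'*(c*x) [MOD M] := (Nat.mod_modEq _ _).mul_left c'
        _ = (c*c')*x := by ring
        _ ≡ 1*x [MOD M] := h5.mul_right x
        _ = x := by ring
    calc (c'*((c*x)%M)) % M = x % M := h6
      _ = x := Nat.mod_eq_of_lt hx
  have hreindex : mazurRiemannSum p c n N
      = ∑ b ∈ range M, (((c*b) % M : ℕ) : ℂ)^n *
          ∑ ξ ∈ (nthRootsFinset c (1 : ℂ)).erase 1, ξ^((c*b) % M)/(1 - ξ^M) := by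
    rw [mazurRiemannSum]
    refine Finset.sum_nbij' (i := fun a => (c'*a) % M) (j := fun b => (c*b) % M)
      ?_ ?_ ?_ ?_ ?_
    · intro a _
      exact mem_range.mpr (Nat.mod_lt _ (by omega))
    · intro b _
      exact mem_range.mpr (Nat.mod_lt _ (by omega))
    · intro a ha
      exact hmod a (mem_range.mp ha)
    · intro b hb
      exact hmod' b (mem_range.mp hb)
    · intro a ha
      rw [hmod a (mem_range.mp ha)]
  rw [hreindex]
  have hqq : ((qq p c n N : ℚ) : ℂ) = ∑ b ∈ range M,
      (((c*b) % M : ℕ) : ℂ)^n * (((c:ℂ)-1)/2 - (((c*b) / M : ℕ) : ℂ)) := by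
    rw [qq]
    push_cast
    rfl
  rw [hqq]
  apply Finset.sum_congr rfl
  intro b hb
  rw [inner_sum_eq c M hc hcop.symm (mem_range.mp hb)]

end Complex


lemma qq_eq (p c n N : ℕ) (hp : 0 < p) (hc : 2 ≤ c) :
    ∃ E : ℤ, qq p c n N
      = (c:ℚ)^n * (∑ i ∈ Ico 1 c, Sp n ((((i*(p^N) + c - 1)/c : ℕ) : ℚ)))
        - ((c:ℚ)-1) * (c:ℚ)^n * Sp n ((p^N : ℕ) : ℚ) / 2
        + (E:ℚ) * ((p^N : ℕ):ℚ) / 2 := by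
  set M := p^N with hMdef
  have hM : 0 < M := Nat.pow_pos hp
  -- the integer correction terms
  set z : ℕ → ℤ := fun b => ((((c*b):ℕ)^n : ℤ) - (((c*b) % M : ℕ)^n : ℤ)) / (M:ℤ) with hz
  have hzspec : ∀ b : ℕ, (M:ℤ) * z b
      = (((c*b):ℕ)^n : ℤ) - (((c*b) % M : ℕ)^n : ℤ) := by
    intro b
    apply Int.mul_ediv_cancel'
    exact_mod_cast ((Nat.mod_modEq (c*b) M).pow n).dvd
  have hcast : ∀ b : ℕ, ((((c*b) % M : ℕ)) : ℚ)^n = (((c*b):ℕ) : ℚ)^n - (M:ℚ) * (z b : ℚ) := by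
    intro b
    have h2 : ((M:ℕ):ℚ) * (z b : ℚ)
        = (((c*b):ℕ):ℚ)^n - ((((c*b) % M : ℕ)):ℚ)^n := by
      exact_mod_cast hzspec b
    linarith [h2]
  -- the floor function
  have he_lt : ∀ b : ℕ, b < M → (c*b)/M < c := by
    intro b hb
    rw [Nat.div_lt_iff_lt_mul hM]
    exact mul_lt_mul_of_pos_left hb (by omega : 0 < c)
  -- indicator expansion of the floor
  have hind : ∀ b : ℕ, b < M → ((((c*b)/M : ℕ)) : ℚ)
      = ∑ i ∈ Ico 1 c, (if i*M ≤ c*b then (1:ℚ) else 0) := by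
    intro b hb
    rw [Finset.sum_boole]
    congr 1
    have hfil : (Ico 1 c).filter (fun i => i*M ≤ c*b) = Ico 1 ((c*b)/M + 1) := by
      ext i
      simp only [mem_filter, mem_Ico]
      constructor
      · rintro ⟨⟨h1, _⟩, h3⟩
        refine ⟨h1, ?_⟩
        have : i ≤ (c*b)/M := (Nat.le_div_iff_mul_le hM).mpr h3
        omega
      · rintro ⟨h1, h2⟩
        have h3 : i ≤ (c*b)/M := by omega
        have h4 := (Nat.le_div_iff_mul_le hM).mp h3
        exact ⟨⟨h1, by have := he_lt b hb; omega⟩, h4⟩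
    rw [hfil, Nat.card_Ico]
    simp
  -- main rearrangement
  refine ⟨∑ b ∈ range M, z b * (2*(((c*b)/M : ℕ):ℤ) - (c:ℤ) + 1), ?_⟩
  have t1 : qq p c n N = ∑ b ∈ range M,
      ((((c*b):ℕ):ℚ)^n * (((c:ℚ)-1)/2 - ((((c*b)/M : ℕ)):ℚ))
        + (z b : ℚ) * (2*((((c*b)/M : ℕ)):ℚ) - (c:ℚ) + 1) * (M:ℚ) / 2) := by
    rw [qq, ← hMdef]
    apply sum_congr rfl
    intro b _
    rw [hcast b]
    ring
  have t2 : (((∑ b ∈ range M, z b * (2*(((c*b)/M : ℕ):ℤ) - (c:ℤ) + 1)) : ℤ) : ℚ)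
      = ∑ b ∈ range M, (z b : ℚ) * (2*((((c*b)/M : ℕ)):ℚ) - (c:ℚ) + 1) := by
    push_cast
    rfl
  rw [t1, Finset.sum_add_distrib, t2]
  have t3 : ∑ b ∈ range M, (z b : ℚ) * (2*((((c*b)/M : ℕ)):ℚ) - (c:ℚ) + 1) * (M:ℚ) / 2
      = (∑ b ∈ range M, (z b : ℚ) * (2*((((c*b)/M : ℕ)):ℚ) - (c:ℚ) + 1)) * (M:ℚ) / 2 := by
    rw [← Finset.sum_div, ← Finset.sum_mul]
  rw [t3]
  have t4 : ∑ b ∈ range M, (((c*b):ℕ):ℚ)^n * (((c:ℚ)-1)/2 - ((((c*b)/M : ℕ)):ℚ))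
      = (c:ℚ)^n * (((c:ℚ)-1)/2) * Sp n M
        - (c:ℚ)^n * ∑ b ∈ range M, (b:ℚ)^n * ((((c*b)/M : ℕ)):ℚ) := by
    have t4a : ∀ b ∈ range M, (((c*b):ℕ):ℚ)^n * (((c:ℚ)-1)/2 - ((((c*b)/M : ℕ)):ℚ))
        = (c:ℚ)^n * ((b:ℚ)^n * (((c:ℚ)-1)/2)) - (c:ℚ)^n * ((b:ℚ)^n * ((((c*b)/M : ℕ)):ℚ)) := by
      intro b _
      push_cast
      ring
    rw [Finset.sum_congr rfl t4a, Finset.sum_sub_distrib, ← Finset.mul_sum, ← Finset.mul_sum,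
      ← Finset.sum_mul, sum_range_pow_eq]
    ring
  -- the inner floor sum
  have hfil2 : ∀ i : ℕ, (range M).filter (fun b => i*M ≤ c*b) = Ico ((i*M + c - 1)/c) M := by
    intro i
    ext b
    simp only [mem_filter, mem_range, mem_Ico]
    have hdiv : (i*M + c - 1)/c ≤ b ↔ i*M ≤ c*b := by
      rw [Nat.div_le_iff_le_mul_add_pred (by omega : 0 < c)]
      omega
    tauto
  have hmiM : ∀ i ∈ Ico 1 c, (i*M + c - 1)/c ≤ M := by
    intro i hi
    rw [Nat.div_le_iff_le_mul_add_pred (by omega : 0 < c)]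
    have hic : i ≤ c := by simp [mem_Ico] at hi; omega
    have : i*M ≤ c*M := Nat.mul_le_mul_right M hic
    omega
  have t5 : ∑ b ∈ range M, (b:ℚ)^n * ((((c*b)/M : ℕ)):ℚ)
      = ∑ i ∈ Ico 1 c, (Sp n M - Sp n ((((i*M + c - 1)/c : ℕ)):ℚ)) := by
    have t5a : ∀ b ∈ range M, (b:ℚ)^n * ((((c*b)/M : ℕ)):ℚ)
        = ∑ i ∈ Ico 1 c, (if i*M ≤ c*b then (b:ℚ)^n else 0) := by
      intro b hb
      rw [hind b (mem_range.mp hb), Finset.mul_sum]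
      apply sum_congr rfl
      intro i _
      split <;> ring
    rw [Finset.sum_congr rfl t5a, Finset.sum_comm]
    apply sum_congr rfl
    intro i hi
    rw [← Finset.sum_filter, hfil2 i, Finset.sum_Ico_eq_sub _ (hmiM i hi),
      sum_range_pow_eq, sum_range_pow_eq]
  rw [t4, t5, Finset.sum_sub_distrib, Finset.sum_const, Nat.card_Ico, nsmul_eq_mul]
  have hcc : ((c - 1 : ℕ) : ℚ) = (c:ℚ) - 1 := by
    push_cast [Nat.cast_sub (by omega : 1 ≤ c)]
    ring
  rw [hcc]
  ring


section Final

variable (p : ℕ) [Fact p.Prime] (c : ℕ) (hc : 2 ≤ c) (hcp : Nat.Coprime c p) (n : ℕ)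

lemma norm_c_one (hcp : Nat.Coprime c p) (hc : 2 ≤ c) : ‖((c:ℕ) : ℚ_[p])‖ = 1 := by
  have hprime : p.Prime := Fact.out
  refine le_antisymm (norm_natCast_le_one p c) ?_
  by_contra hlt
  push_neg at hlt
  have h2 : ‖((c:ℤ) : ℚ_[p])‖ < 1 := by push_cast; exact hlt
  rw [Padic.norm_intCast_lt_one_iff] at h2
  have h3 : p ∣ c := Int.ofNat_dvd.mp h2
  have h4 := Nat.Coprime.eq_one_of_dvd hcp.symm h3
  have := hprime.one_lt
  omega

lemma Ltarget_eq (hcp : Nat.Coprime c p) (hc : 2 ≤ c) :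
    (1 - (c:ℚ)^(n+1)) * _root_.bernoulli (n+1) / ((n:ℚ)+1)
      = (c:ℚ)^n * ∑ i ∈ Ico 1 c, Sp n ((i:ℚ)/c) := by
  have h := raabe p c (by omega) (norm_c_one p c hcp hc) n
  have hsplit : ∑ r ∈ range c, Sp n ((r:ℚ)/c) = ∑ i ∈ Ico 1 c, Sp n ((i:ℚ)/c) := by
    rw [Finset.range_eq_Ico, Finset.sum_eq_sum_Ico_succ_bot (by omega : 0 < c)]
    norm_num [Sp_zero]
  rw [hsplit] at h
  have hn0 : ((n:ℚ)+1) ≠ 0 := by positivity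
  have hc0 : (c:ℚ) ≠ 0 := by positivity
  have hne : (c:ℚ) * ((n:ℚ)+1) ≠ 0 := by positivity
  apply mul_left_cancel₀ hne
  rw [show (c:ℚ) * ((n:ℚ)+1) * ((c:ℚ)^n * ∑ i ∈ Ico 1 c, Sp n ((i:ℚ)/c))
      = (c:ℚ)^(n+1) * ((n:ℚ)+1) * ∑ i ∈ Ico 1 c, Sp n ((i:ℚ)/c) by ring, h]
  field_simp
  ring

lemma main_bound (hcp : Nat.Coprime c p) (hc : 2 ≤ c) :
    ∃ D : ℝ, ∀ N : ℕ,
      ‖((qq p c n N : ℚ) : ℚ_[p])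
        - (((1 - (c:ℚ)^(n+1)) * _root_.bernoulli (n+1) / ((n:ℚ)+1) : ℚ) : ℚ_[p])‖
      ≤ D * ((p:ℝ)⁻¹)^N := by
  have hprime : p.Prime := Fact.out
  have hp2 : 2 ≤ p := hprime.two_le
  have hc1 : ‖((c:ℕ) : ℚ_[p])‖ = 1 := norm_c_one p c hcp hc
  have hcne : ((c:ℕ) : ℚ_[p]) ≠ 0 := by
    intro h; rw [h] at hc1; simp at hc1
  set Cb : ℝ := ((n:ℝ)+2) * CK p n with hCb
  have hCb0 : 0 ≤ Cb := by
    have := CK_nonneg p n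
    positivity
  refine ⟨(c:ℝ) * Cb + ‖((((c:ℚ)-1) * (c:ℚ)^n / 2 : ℚ) : ℚ_[p])‖ * Cb
      + ‖(((1:ℚ)/2 : ℚ) : ℚ_[p])‖, ?_⟩
  intro N
  set M := p^N with hMdef
  have hM0 : 0 < M := Nat.pow_pos (by omega)
  have hcM : Nat.Coprime c M := hcp.pow_right N
  have hMnorm : ‖((M:ℕ) : ℚ_[p])‖ = ((p:ℝ)⁻¹)^N := by
    rw [hMdef]
    push_cast
    rw [norm_pow, Padic.norm_p]
  have hMle1 : ‖((M:ℕ) : ℚ_[p])‖ ≤ 1 := norm_natCast_le_one p M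
  obtain ⟨E, hE⟩ := qq_eq p c n N (by omega) hc
  set m : ℕ → ℕ := fun i => (i*M + c - 1)/c with hm
  set r : ℕ → ℕ := fun i => c * m i - i*M with hrdef
  have h_cm : ∀ i, i*M ≤ c * m i := by
    intro i
    have := (Nat.div_le_iff_le_mul_add_pred (by omega : 0 < c) (a := i*M + c - 1)).mp
      (le_refl (m i))
    omega
  have h_cm2 : ∀ i, c * m i ≤ i*M + c - 1 := by
    intro i
    have := Nat.div_mul_le_self (i*M + c - 1) c
    calc c * m i = m i * c := by ring
      _ ≤ i*M + c - 1 := this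
  have hr_eq : ∀ i, c * m i = i*M + r i := by
    intro i
    have := h_cm i
    simp only [hrdef]
    omega
  have hr_lt : ∀ i, r i < c := by
    intro i
    have h1 := h_cm i
    have h2 := h_cm2 i
    simp only [hrdef]
    omega
  have hr_ne : ∀ i ∈ Ico 1 c, r i ≠ 0 := by
    intro i hi h0
    simp only [mem_Ico] at hi
    have hdvd : c ∣ i*M := ⟨m i, by have := hr_eq i; omega⟩
    have hdi : c ∣ i := hcM.dvd_of_dvd_mul_right hdvd
    have := Nat.le_of_dvd (by omega) hdi
    omega
  have hinj : Set.InjOn r (Ico 1 c) := by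
    intro i hi j hj hij
    simp only [Finset.coe_Ico, Set.mem_Ico] at hi hj
    have ei : (c:ℤ) * (m i) = (i:ℤ)*M + r i := by exact_mod_cast hr_eq i
    have ej : (c:ℤ) * (m j) = (j:ℤ)*M + r j := by exact_mod_cast hr_eq j
    have hrij : ((r i : ℕ):ℤ) = ((r j : ℕ):ℤ) := by exact_mod_cast congrArg (Nat.cast (R := ℤ)) hij
    have hZ : (c:ℤ) ∣ ((j:ℤ) - i) * (M:ℤ) := ⟨(m j : ℤ) - m i, by linarith [ei, ej, hrij]⟩
    have hcop' : IsCoprime ((c:ℕ):ℤ) ((M:ℕ):ℤ) := Nat.isCoprime_iff_coprime.mpr hcM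
    have hdvd2 : (c:ℤ) ∣ ((j:ℤ) - i) := hcop'.dvd_of_dvd_mul_right hZ
    have : ((j:ℤ) - i) = 0 := by
      apply Int.eq_zero_of_abs_lt_dvd hdvd2
      rw [abs_sub_lt_iff]
      constructor <;> [skip; skip] <;> push_cast <;> omega
    omega
  have himg : (Ico 1 c).image r = Ico 1 c := by
    apply Finset.eq_of_subset_of_card_le
    · intro x hx
      simp only [Finset.mem_image] at hx
      obtain ⟨i, hi, hix⟩ := hx
      rw [mem_Ico]
      refine ⟨?_, ?_⟩
      · have := hr_ne i hi; omega
      · rw [← hix]; exact hr_lt i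
    · rw [Finset.card_image_of_injOn hinj]
  have hsum_r : ∑ i ∈ Ico 1 c, Sp n (((i:ℕ):ℚ)/c) = ∑ i ∈ Ico 1 c, Sp n (((r i : ℕ):ℚ)/c) := by
    conv_lhs => rw [← himg]
    rw [Finset.sum_image hinj]
  -- the decomposition
  have hdecomp : qq p c n N
      - ((1 - (c:ℚ)^(n+1)) * _root_.bernoulli (n+1) / ((n:ℚ)+1))
      = (c:ℚ)^n * (∑ i ∈ Ico 1 c, (Sp n (((m i : ℕ)):ℚ) - Sp n (((r i : ℕ):ℚ)/c)))
        - (((c:ℚ)-1) * (c:ℚ)^n / 2) * Sp n ((M:ℕ) : ℚ)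
        + (E:ℚ) * ((M:ℕ):ℚ) * (1/2) := by
    rw [hE, Ltarget_eq p c n hcp hc, hsum_r, Finset.sum_sub_distrib]
    rw [← hMdef]
    ring
  -- move to ℚ_[p]
  have hcast : ((qq p c n N : ℚ) : ℚ_[p])
      - (((1 - (c:ℚ)^(n+1)) * _root_.bernoulli (n+1) / ((n:ℚ)+1) : ℚ) : ℚ_[p])
      = ((c:ℕ):ℚ_[p])^n * (∑ i ∈ Ico 1 c,
          (SpQ p n (((m i : ℕ)):ℚ_[p]) - SpQ p n (((r i : ℕ):ℚ_[p])/((c:ℕ):ℚ_[p]))))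
        - (((((c:ℚ)-1) * (c:ℚ)^n / 2 : ℚ)) : ℚ_[p]) * SpQ p n (((M:ℕ)) : ℚ_[p])
        + ((E:ℤ):ℚ_[p]) * ((M:ℕ):ℚ_[p]) * (((1:ℚ)/2 : ℚ) : ℚ_[p]) := by
    have := congrArg (fun q : ℚ => (q : ℚ_[p])) hdecomp
    push_cast [cast_Sp] at this ⊢
    convert this using 2 <;> push_cast <;> ring
  rw [hcast]
  set X := ((c:ℕ):ℚ_[p])^n * (∑ i ∈ Ico 1 c,
      (SpQ p n (((m i : ℕ)):ℚ_[p]) - SpQ p n (((r i : ℕ):ℚ_[p])/((c:ℕ):ℚ_[p])))) with hX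
  set Y := (((((c:ℚ)-1) * (c:ℚ)^n / 2 : ℚ)) : ℚ_[p]) * SpQ p n (((M:ℕ)) : ℚ_[p]) with hY
  set Z := ((E:ℤ):ℚ_[p]) * ((M:ℕ):ℚ_[p]) * (((1:ℚ)/2 : ℚ) : ℚ_[p]) with hZ
  have hb1 : ‖X‖ ≤ (c:ℝ) * Cb * ((p:ℝ)⁻¹)^N := by
    rw [hX, norm_mul, norm_pow, hc1, one_pow, one_mul]
    refine (norm_sum_le _ _).trans ?_
    have hterm : ∀ i ∈ Ico 1 c,
        ‖SpQ p n (((m i : ℕ)):ℚ_[p]) - SpQ p n (((r i : ℕ):ℚ_[p])/((c:ℕ):ℚ_[p]))‖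
          ≤ Cb * ((p:ℝ)⁻¹)^N := by
      intro i _
      have h1 : ‖((m i : ℕ):ℚ_[p])‖ ≤ 1 := norm_natCast_le_one p _
      have h2 : ‖((r i : ℕ):ℚ_[p])/((c:ℕ):ℚ_[p])‖ ≤ 1 := by
        rw [norm_div, hc1, div_one]
        exact norm_natCast_le_one p _
      refine (lip_SpQ p n _ _ h1 h2).trans ?_
      rw [hCb]
      apply mul_le_mul_of_nonneg_left ?_ (by have := CK_nonneg p n; positivity)
      have hdiff : ((m i : ℕ):ℚ_[p]) - ((r i : ℕ):ℚ_[p])/((c:ℕ):ℚ_[p])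
          = (((i:ℕ):ℚ_[p]) * ((M:ℕ):ℚ_[p]))/((c:ℕ):ℚ_[p]) := by
        have hcast3 : ((c:ℕ):ℚ_[p]) * ((m i:ℕ):ℚ_[p])
            = ((i:ℕ):ℚ_[p])*((M:ℕ):ℚ_[p]) + ((r i:ℕ):ℚ_[p]) := by
          exact_mod_cast hr_eq i
        field_simp
        linear_combination hcast3
      rw [hdiff, norm_div, norm_mul, hc1, div_one, hMnorm]
      calc ‖((i:ℕ):ℚ_[p])‖ * ((p:ℝ)⁻¹)^N ≤ 1 * ((p:ℝ)⁻¹)^N :=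
            mul_le_mul_of_nonneg_right (norm_natCast_le_one p i) (by positivity)
        _ = ((p:ℝ)⁻¹)^N := one_mul _
    refine (sum_le_sum hterm).trans ?_
    rw [sum_const, Nat.card_Ico, nsmul_eq_mul]
    have hcle : ((c - 1 : ℕ):ℝ) ≤ (c:ℝ) := by
      have : (c - 1 : ℕ) ≤ c := by omega
      exact_mod_cast this
    calc ((c-1:ℕ):ℝ) * (Cb * ((p:ℝ)⁻¹)^N) ≤ (c:ℝ) * (Cb * ((p:ℝ)⁻¹)^N) :=
          mul_le_mul_of_nonneg_right hcle (by positivity)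
      _ = (c:ℝ) * Cb * ((p:ℝ)⁻¹)^N := by ring
  have hb2 : ‖Y‖ ≤ ‖((((c:ℚ)-1) * (c:ℚ)^n / 2 : ℚ) : ℚ_[p])‖ * Cb * ((p:ℝ)⁻¹)^N := by
    rw [hY, norm_mul, mul_assoc]
    apply mul_le_mul_of_nonneg_left ?_ (norm_nonneg _)
    have h3 := lip_SpQ p n (((M:ℕ)) : ℚ_[p]) 0 hMle1 (by simp)
    rw [SpQ_zero, sub_zero, sub_zero, hMnorm] at h3
    rw [← hCb] at h3
    exact h3
  have hb3 : ‖Z‖ ≤ ‖(((1:ℚ)/2 : ℚ) : ℚ_[p])‖ * ((p:ℝ)⁻¹)^N := by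
    rw [hZ, norm_mul, norm_mul, hMnorm]
    have hE1 : ‖((E:ℤ):ℚ_[p])‖ ≤ 1 := Padic.norm_int_le_one E
    calc ‖((E:ℤ):ℚ_[p])‖ * ((p:ℝ)⁻¹)^N * ‖(((1:ℚ)/2 : ℚ) : ℚ_[p])‖
        ≤ 1 * ((p:ℝ)⁻¹)^N * ‖(((1:ℚ)/2 : ℚ) : ℚ_[p])‖ := by
          apply mul_le_mul_of_nonneg_right ?_ (norm_nonneg _)
          exact mul_le_mul_of_nonneg_right hE1 (by positivity)
      _ = ‖(((1:ℚ)/2 : ℚ) : ℚ_[p])‖ * ((p:ℝ)⁻¹)^N := by ring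
  calc ‖X - Y + Z‖ ≤ ‖X - Y‖ + ‖Z‖ := norm_add_le _ _
    _ ≤ (‖X‖ + ‖Y‖) + ‖Z‖ := by linarith [norm_sub_le X Y]
    _ ≤ ((c:ℝ) * Cb * ((p:ℝ)⁻¹)^N
          + ‖((((c:ℚ)-1) * (c:ℚ)^n / 2 : ℚ) : ℚ_[p])‖ * Cb * ((p:ℝ)⁻¹)^N)
        + ‖(((1:ℚ)/2 : ℚ) : ℚ_[p])‖ * ((p:ℝ)⁻¹)^N := by linarith [hb1, hb2, hb3]
    _ = ((c:ℝ) * Cb + ‖((((c:ℚ)-1) * (c:ℚ)^n / 2 : ℚ) : ℚ_[p])‖ * Cb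
          + ‖(((1:ℚ)/2 : ℚ) : ℚ_[p])‖) * ((p:ℝ)⁻¹)^N := by ring

lemma qq_tendsto (hcp : Nat.Coprime c p) (hc : 2 ≤ c) :
    Filter.Tendsto (fun N => ((qq p c n N : ℚ) : ℚ_[p])) Filter.atTop
      (nhds (((1 - (c : ℚ) ^ (n + 1)) * _root_.bernoulli (n + 1) / ((n : ℚ) + 1) : ℚ) : ℚ_[p])) := by
  obtain ⟨D, hD⟩ := main_bound p c n hcp hc
  have hprime : p.Prime := Fact.out
  have hppos : (1:ℝ) < p := by exact_mod_cast hprime.one_lt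
  rw [← tendsto_sub_nhds_zero_iff]
  apply squeeze_zero_norm hD
  rw [show (0:ℝ) = D * 0 by ring]
  exact (tendsto_pow_atTop_nhds_zero_of_lt_one (by positivity)
    (by rw [inv_lt_one_iff₀]; right; linarith)).const_mul D

end Final

end MazurAux

/-- The Riemann sums `s_N` are rational, and in `ℚ_p` they converge to
`(1 − c^{n+1})·B_{n+1}/(n+1)`. -/
theorem mazurRiemannSum_rat_tendsto (p : ℕ) [Fact p.Prime] (c : ℕ) (hc : 2 ≤ c)
    (hcp : Nat.Coprime c p) (n : ℕ) :
    (∃ q : ℕ → ℚ, ∀ N, 1 ≤ N → ((q N : ℂ) = mazurRiemannSum p c n N)) ∧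
    ∀ q : ℕ → ℚ, (∀ N, 1 ≤ N → ((q N : ℂ) = mazurRiemannSum p c n N)) →
      Filter.Tendsto (fun N => ((q N : ℚ_[p]))) Filter.atTop
        (nhds (((1 - (c : ℚ) ^ (n + 1)) * bernoulli (n + 1) / ((n : ℚ) + 1) : ℚ) : ℚ_[p])) := by
  have hprime : p.Prime := Fact.out
  have hp2 : 2 ≤ p := hprime.two_le
  have hpart1 : ∀ N, 1 ≤ N → ((MazurAux.qq p c n N : ℚ) : ℂ) = mazurRiemannSum p c n N := by
    intro N hN
    apply MazurAux.part1 c p n N hc (hcp.pow_right N)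
    calc 2 ≤ p := hp2
      _ = p^1 := (pow_one p).symm
      _ ≤ p^N := Nat.pow_le_pow_right (by omega) hN
  constructor
  · exact ⟨_, hpart1⟩
  · intro q hq
    have hEq : ∀ᶠ N in Filter.atTop,
        ((MazurAux.qq p c n N : ℚ) : ℚ_[p]) = ((q N : ℚ) : ℚ_[p]) := by
      rw [Filter.eventually_atTop]
      refine ⟨1, fun N hN => ?_⟩
      have h3 : ((q N : ℚ) : ℂ) = ((MazurAux.qq p c n N : ℚ) : ℂ) :=
        (hq N hN).trans (hpart1 N hN).symm
      have h2 : q N = MazurAux.qq p c n N := by exact_mod_cast h3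
      rw [h2]
    exact Filter.Tendsto.congr' hEq (MazurAux.qq_tendsto p c n hcp hc)
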